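/- Let σ be a full-dimensional simplicial rational cone in N_ℝ with N ≅ ℤ^d and M = Hom(N, ℤ). Set P = σ^∨ ∩ M and F = { h ∈ M ⊗ ℚ : ⟨h, s⟩ ∈ ℤ_{≥0} for all s in the submonoid S generated by the first lattice points of the rays of σ }. Then the natural inclusion P ⊆ F realizes P as a submonoid of F that is close to F. -/

import Mathlib

/-- With `σ` a full-dimensional simplicial rational cone with
primitive ray generators `ζ i` (first lattice points), `P = σ^∨ ∩ M`
(integral points pairing nonnegatively with all of `σ`, i.e. with the `ζ i`),
and `F = { h ∈ M ⊗ ℚ : ⟨h, s⟩ ∈ ℤ_{≥0} ∀ s ∈ S }` where `S` is generated by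
the `ζ i`: the natural inclusion realizes `P` as a submonoid of `F` close to
`F` (every element of `F` has a positive multiple in `P`). -/
theorem stmt5 {d : ℕ} (ζ : Fin d → (Fin d → ℤ))
    (hprim : ∀ (i : Fin d) (g : Fin d → ℤ) (n : ℕ), ζ i = n • g → n = 1)
    (hlin : LinearIndependent ℚ fun i => fun j => (ζ i j : ℚ))
    (P F : AddSubmonoid (Fin d → ℚ))
    (hP : ∀ h : Fin d → ℚ, h ∈ P ↔
      ((∃ m : Fin d → ℤ, ∀ j, h j = (m j : ℚ)) ∧ ∀ i, 0 ≤ ∑ j, h j * (ζ i j : ℚ)))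
    (hF : ∀ h : Fin d → ℚ, h ∈ F ↔
      ∀ s ∈ AddSubmonoid.closure (Set.range ζ),
        ∃ k : ℕ, ∑ j, h j * (s j : ℚ) = (k : ℚ)) :
    P ≤ F ∧ ∀ h ∈ F, ∃ n : ℕ, 0 < n ∧ n • h ∈ P := by
  constructor
  · -- P ≤ F
    intro h hh
    obtain ⟨⟨m, hm⟩, hpos⟩ := (hP h).1 hh
    rw [hF]
    intro s hs
    induction hs using AddSubmonoid.closure_induction with
    | mem s hs =>
      obtain ⟨i, rfl⟩ := hs
      have hint : (∑ j, h j * ((ζ i) j : ℚ)) = ((∑ j, m j * ζ i j : ℤ) : ℚ) := by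
        push_cast
        exact Finset.sum_congr rfl fun j _ => by rw [hm j]
      have h0 : (0:ℤ) ≤ ∑ j, m j * ζ i j := by
        have := hpos i
        rw [hint] at this
        exact_mod_cast this
      exact ⟨(∑ j, m j * ζ i j).toNat, by rw [hint]; exact_mod_cast (Int.toNat_of_nonneg h0).symm⟩
    | zero =>
      exact ⟨0, by simp⟩
    | add s t _ _ hks hkt =>
      obtain ⟨k1, hk1⟩ := hks
      obtain ⟨k2, hk2⟩ := hkt
      refine ⟨k1 + k2, ?_⟩
      have : ∑ j, h j * ((s + t) j : ℚ) = (∑ j, h j * (s j : ℚ)) + ∑ j, h j * (t j : ℚ) := by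
        rw [← Finset.sum_add_distrib]
        exact Finset.sum_congr rfl fun j _ => by simp [mul_add]
      rw [this, hk1, hk2]; push_cast; ring
  · -- closeness
    intro h hh
    have hF' := (hF h).1 hh
    set n : ℕ := ∏ j, (h j).den with hn
    have hnpos : 0 < n := Finset.prod_pos fun j _ => (h j).pos
    refine ⟨n, hnpos, ?_⟩
    rw [hP]
    constructor
    · refine ⟨fun j => ((n / (h j).den : ℕ) : ℤ) * (h j).num, fun j => ?_⟩
      have hdvd : (h j).den ∣ n := Finset.dvd_prod_of_mem _ (Finset.mem_univ j)
      obtain ⟨c, hc⟩ := hdvd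
      have hcn : n / (h j).den = c := by rw [hc, Nat.mul_div_cancel_left _ (h j).pos]
      have : (n • h) j = (n : ℚ) * h j := by simp [mul_comm]
      rw [this]
      show (n:ℚ) * h j = (((n / (h j).den : ℕ) : ℤ) * (h j).num : ℤ)
      rw [hcn, hc]
      push_cast
      rw [mul_comm ((h j).den : ℚ) c, mul_assoc, Rat.den_mul_eq_num]
    · intro i
      have hζ : ζ i ∈ AddSubmonoid.closure (Set.range ζ) :=
        AddSubmonoid.subset_closure ⟨i, rfl⟩
      obtain ⟨k, hk⟩ := hF' (ζ i) hζ
      have : ∑ j, (n • h) j * ((ζ i) j : ℚ) = (n : ℚ) * ∑ j, h j * ((ζ i) j : ℚ) := by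
        rw [Finset.mul_sum]
        exact Finset.sum_congr rfl fun j _ => by simp; ring
      rw [this, hk]
      positivity
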